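/- Let (Y_n)_{n≥-2} be i.i.d. uniform on [0,1] and X_{n,1} = max{Y_n, Y_{n-2}, Y_{n-3}}. For u_n = 1 - τ'/n with τ' > 0, the limit of n·P(X_{1,1} ≤ u_n < X_{2,1}) as n → ∞ equals 2τ'. (The upcrossing rate of the level u_n for X_{·,1} is 2τ'.) -/

import Mathlib

open MeasureTheory ProbabilityTheory Filter Set

theorem stmt1
    {Ω : Type*} [MeasurableSpace Ω] (P : Measure Ω) [IsProbabilityMeasure P]
    (Y : ℤ → Ω → ℝ) (hYm : ∀ i, Measurable (Y i))
    (hIndep : iIndepFun Y P)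
    (hUnif : ∀ i, Measure.map (Y i) P = volume.restrict (Icc (0:ℝ) 1))
    (τ' : ℝ) (hτ : 0 < τ')
    (X : ℕ → Ω → ℝ)
    (hX : ∀ i : ℕ, X i = fun ω => max (Y i ω) (max (Y ((i:ℤ) - 2) ω) (Y ((i:ℤ) - 3) ω)))
    (u : ℕ → ℝ) (hu : ∀ n : ℕ, u n = 1 - τ' / n) :
    Tendsto (fun n : ℕ => (n : ℝ) * (P {ω | X 1 ω ≤ u n ∧ u n < X 2 ω}).toReal)
      atTop (nhds (2 * τ')) := by
  -- CDF of each Y i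
  have hcdf : ∀ (i : ℤ) (t : ℝ), 0 ≤ t → t ≤ 1 →
      P (Y i ⁻¹' Iic t) = ENNReal.ofReal t := by
    intro i t h0 h1
    rw [← Measure.map_apply (hYm i) measurableSet_Iic, hUnif i,
      Measure.restrict_apply measurableSet_Iic]
    have : Iic t ∩ Icc (0:ℝ) 1 = Icc 0 t := by
      ext x
      simp only [mem_inter_iff, mem_Iic, mem_Icc]
      constructor
      · rintro ⟨hx, hx0, _⟩; exact ⟨hx0, hx⟩
      · rintro ⟨hx0, hx⟩; exact ⟨hx, hx0, hx.trans h1⟩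
    rw [this, Real.volume_Icc, sub_zero]
  -- eventually the term equals τ' * (u n)^3 * (1 + u n)
  have hev : ∀ᶠ n : ℕ in atTop,
      (n : ℝ) * (P {ω | X 1 ω ≤ u n ∧ u n < X 2 ω}).toReal
        = τ' * (u n) ^ 3 * (1 + u n) := by
    filter_upwards [eventually_ge_atTop (⌈τ'⌉₊ + 1)] with n hn
    have hn1 : 1 ≤ n := le_trans (Nat.le_add_left 1 _) hn
    have hnτ : τ' ≤ (n : ℝ) := by
      calc τ' ≤ (⌈τ'⌉₊ : ℝ) := Nat.le_ceil τ'
        _ ≤ (n : ℝ) := by exact_mod_cast le_trans (Nat.le_succ _) hn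
    have hnpos : (0:ℝ) < n := by positivity
    set c : ℝ := u n with hc
    have hc0 : 0 ≤ c := by
      rw [hc, hu, sub_nonneg, div_le_one hnpos]; exact hnτ
    have hc1 : c ≤ 1 := by
      rw [hc, hu]
      have : 0 ≤ τ' / n := by positivity
      linarith
    -- the two intersections
    set A : Set Ω := ⋂ i ∈ ({1, -1, -2} : Finset ℤ), Y i ⁻¹' Iic c with hA
    set B : Set Ω := ⋂ i ∈ ({1, -1, -2, 2, 0} : Finset ℤ), Y i ⁻¹' Iic c with hB
    have hBA : B ⊆ A := by
      intro ω hω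
      simp only [hA, hB, Finset.mem_insert, Finset.mem_singleton, mem_iInter,
        mem_preimage, mem_Iic] at *
      intro i hi
      rcases hi with h | h | h <;> exact hω i (by tauto)
    have hEvent : {ω | X 1 ω ≤ c ∧ c < X 2 ω} = A \ B := by
      ext ω
      simp only [hA, hB, mem_setOf_eq, hX, mem_diff, mem_iInter, Finset.mem_insert,
        Finset.mem_singleton, mem_preimage, mem_Iic, max_le_iff, not_lt, not_forall]
      norm_num
      intro h1 hm1 hm2
      constructor
      · rintro (h | h | h) <;> tauto
      · rintro (h | h | h | h | h) <;> first | tauto | linarith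
    have hmeas : ∀ (S : Finset ℤ), ∀ i ∈ S,
        MeasurableSet[(inferInstance : MeasurableSpace ℝ).comap (Y i)] (Y i ⁻¹' Iic c) :=
      fun S i _ => ⟨Iic c, measurableSet_Iic, rfl⟩
    have hPA : P A = ENNReal.ofReal c ^ 3 := by
      rw [hA, hIndep.meas_biInter (hmeas _),
        Finset.prod_congr rfl (fun i _ => hcdf i c hc0 hc1), Finset.prod_const]
      norm_num
    have hPB : P B = ENNReal.ofReal c ^ 5 := by
      rw [hB, hIndep.meas_biInter (hmeas _),
        Finset.prod_congr rfl (fun i _ => hcdf i c hc0 hc1), Finset.prod_const]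
      norm_num
    have hBmeas : MeasurableSet B := by
      refine Finset.measurableSet_biInter _ fun i _ => (hYm i) measurableSet_Iic
    have hPdiff : P (A \ B) = P A - P B :=
      measure_diff hBA hBmeas.nullMeasurableSet (measure_ne_top P B)
    have htr : (P {ω | X 1 ω ≤ c ∧ c < X 2 ω}).toReal = c ^ 3 - c ^ 5 := by
      rw [hEvent, hPdiff, ENNReal.toReal_sub_of_le (measure_mono hBA) (measure_ne_top P A),
        hPA, hPB]
      simp [ENNReal.toReal_pow, ENNReal.toReal_ofReal hc0]
    rw [htr]
    have hcval : c = 1 - τ' / n := by rw [hc, hu]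
    have hne : (n:ℝ) ≠ 0 := ne_of_gt hnpos
    rw [hcval]
    field_simp [hcval]
    ring
  refine Tendsto.congr' (hev.mono fun n h => h.symm) ?_
  have hulim : Tendsto u atTop (nhds 1) := by
    have : Tendsto (fun n : ℕ => 1 - τ' / n) atTop (nhds (1 - 0)) :=
      tendsto_const_nhds.sub (tendsto_const_div_atTop_nhds_zero_nat τ')
    simpa [funext hu] using this
  have : Tendsto (fun n => τ' * (u n) ^ 3 * (1 + u n)) atTop
      (nhds (τ' * 1 ^ 3 * (1 + 1))) := by
    exact ((tendsto_const_nhds.mul (hulim.pow 3)).mul (tendsto_const_nhds.add hulim))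
  convert this using 2
  ring
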